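/- Let U be a finite set of pairwise distinct unit vectors in ℝ² with pos(U) = ℝ². Then |U_□| ∈ {0, 1, 2, 4}; in particular |U_□| ≠ 3. -/

import Mathlib

open RealInnerProductSpace

noncomputable section

abbrev V2 : Type := EuclideanSpace ℝ (Fin 2)

/-- The positive hull: all nonnegative linear combinations of elements of `M`. -/
def pos {E : Type*} [AddCommMonoid E] [Module ℝ E] (M : Set E) : Set E :=
  {x | ∃ (s : Finset E) (c : E → ℝ),
    (↑s : Set E) ⊆ M ∧ (∀ v, 0 ≤ c v) ∧ x = ∑ v ∈ s, c v • v}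

/-- The set `U_□` of vectors of `U` not belonging to any positively spanning triple. -/
def Usq (U : Set V2) : Set V2 :=
  {u ∈ U | ¬ ∃ v ∈ U, ∃ w ∈ U, pos {u, v, w} = Set.univ}

namespace Stmt5Aux

/-- determinant -/
def D (x y : V2) : ℝ := x 0 * y 1 - x 1 * y 0
/-- dot product -/
def Cc (x y : V2) : ℝ := x 0 * y 0 + x 1 * y 1

lemma D_swap (x y : V2) : D x y = - D y x := by simp only [D]; ring
lemma D_self (x : V2) : D x x = 0 := by simp only [D]; ring
lemma D_neg_left (x y : V2) : D (-x) y = - D x y := by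
  simp only [D, PiLp.neg_apply]; ring
lemma D_neg_right (x y : V2) : D x (-y) = - D x y := by
  simp only [D, PiLp.neg_apply]; ring

lemma unit_sq {u : V2} (h : ‖u‖ = 1) : u 0 ^ 2 + u 1 ^ 2 = 1 := by
  have h2 : ‖u‖ ^ 2 = 1 := by rw [h]; norm_num
  rw [EuclideanSpace.norm_eq] at h2
  rw [Real.sq_sqrt (by positivity)] at h2
  simpa [Fin.sum_univ_two, sq_abs] using h2

def J (u : V2) : V2 := (WithLp.equiv 2 (Fin 2 → ℝ)).symm ![-(u 1), u 0]

lemma V2_ext {x y : V2} (h0 : x 0 = y 0) (h1 : x 1 = y 1) : x = y := by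
  ext i; fin_cases i
  · exact h0
  · exact h1

lemma ne_neg_self {u : V2} (hu : ‖u‖ = 1) : u ≠ -u := by
  intro h
  have h0 : u 0 = -(u 0) := by
    conv_lhs => rw [h]
    simp [PiLp.neg_apply]
  have h1 : u 1 = -(u 1) := by
    conv_lhs => rw [h]
    simp [PiLp.neg_apply]
  have := unit_sq hu
  nlinarith

lemma D_sum (d : V2) (s : Finset V2) (c : V2 → ℝ) :
    D d (∑ v ∈ s, c v • v) = ∑ v ∈ s, c v * D d v := by
  classical
  induction s using Finset.induction_on with
  | empty => simp [D]
  | insert _ _ h ih =>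
      rw [Finset.sum_insert h, Finset.sum_insert h, ← ih]
      simp only [D, PiLp.add_apply, PiLp.smul_apply, smul_eq_mul]
      ring

lemma pos_le {M : Set V2} {d : V2} (h : ∀ x ∈ M, D d x ≤ 0) :
    ∀ y ∈ pos M, D d y ≤ 0 := by
  rintro y ⟨s, c, hsub, hc, rfl⟩
  rw [D_sum]
  apply Finset.sum_nonpos
  intro v hv
  exact mul_nonpos_iff.mpr (Or.inl ⟨hc v, h v (hsub hv)⟩)

lemma half_contra {M : Set V2} {d : V2} (hd : ‖d‖ = 1)
    (h : ∀ x ∈ M, D d x ≤ 0) : pos M ≠ Set.univ := by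
  intro hM
  have hJ : J d ∈ pos M := by rw [hM]; exact Set.mem_univ _
  have hle := pos_le h (J d) hJ
  have hd2 := unit_sq hd
  have hval : D d (J d) = d 0 ^ 2 + d 1 ^ 2 := by
    simp only [D, J, WithLp.equiv_symm_apply, PiLp.toLp_apply, Matrix.cons_val_zero, Matrix.cons_val_one,
      Matrix.head_cons]
    ring
  rw [hval, hd2] at hle
  linarith

lemma exists_posD {U : Set V2} (hpos : pos U = Set.univ) {u : V2} (hu : ‖u‖ = 1) :
    ∃ a ∈ U, 0 < D u a := by
  by_contra h
  push_neg at h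
  exact half_contra hu h hpos

/-- positively oriented triple spans. -/
lemma span_of_orient {u v w : V2} (h1 : 0 < D u v) (h2 : 0 < D v w) (h3 : 0 < D w u) :
    pos {u, v, w} = Set.univ := by
  classical
  have huv : u ≠ v := by rintro rfl; rw [D_self] at h1; linarith
  have hvw : v ≠ w := by rintro rfl; rw [D_self] at h2; linarith
  have hwu : w ≠ u := by rintro rfl; rw [D_self] at h3; linarith
  have hΔ : D u v ≠ 0 := ne_of_gt h1
  ext x
  simp only [Set.mem_univ, iff_true]
  set a : ℝ := D x v / D u v with ha
  set b : ℝ := D u x / D u v with hb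
  set t : ℝ := |a| / D v w + |b| / D w u with htd
  have ht0 : 0 ≤ t := by
    rw [htd]
    have := abs_nonneg a
    have := abs_nonneg b
    positivity
  have hta : |a| ≤ t * D v w := by
    rw [htd, add_mul, div_mul_cancel₀ _ (ne_of_gt h2)]
    have : 0 ≤ |b| / D w u * D v w := by positivity
    linarith
  have htb : |b| ≤ t * D w u := by
    rw [htd, add_mul, div_mul_cancel₀ _ (ne_of_gt h3)]
    have : 0 ≤ |a| / D v w * D w u := by positivity
    linarith
  have key0 : x 0 = a * u 0 + b * v 0 := by
    rw [ha, hb]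
    field_simp
    simp only [D]
    ring
  have key1 : x 1 = a * u 1 + b * v 1 := by
    rw [ha, hb]
    field_simp
    simp only [D]
    ring
  have cram0 : D v w * u 0 + D w u * v 0 + D u v * w 0 = 0 := by simp only [D]; ring
  have cram1 : D v w * u 1 + D w u * v 1 + D u v * w 1 = 0 := by simp only [D]; ring
  clear_value a b t
  refine ⟨{u, v, w},
    (fun z => if z = u then a + t * D v w else if z = v then b + t * D w u
      else if z = w then t * D u v else 0), ?_, ?_, ?_⟩
  · intro z hz
    simpa using hz
  · intro z
    dsimp only
    split_ifs with hz1 hz2 hz3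
    · have := neg_abs_le a
      nlinarith
    · have := neg_abs_le b
      nlinarith
    · positivity
    · exact le_refl 0
  · rw [Finset.sum_insert (by simp [huv, hwu.symm]),
      Finset.sum_insert (by simp [hvw]), Finset.sum_singleton]
    dsimp only
    rw [if_pos rfl, if_neg (Ne.symm huv), if_pos rfl, if_neg hwu, if_neg (Ne.symm hvw),
      if_pos rfl]
    apply V2_ext
    · simp only [PiLp.add_apply, PiLp.smul_apply, smul_eq_mul]
      linear_combination key0 - t * cram0
    · simp only [PiLp.add_apply, PiLp.smul_apply, smul_eq_mul]
      linear_combination key1 - t * cram1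

/-- spanning triple admits a positive cyclic orientation. -/
lemma orient_of_span {u v w : V2} (hu : ‖u‖ = 1) (hv : ‖v‖ = 1) (hw : ‖w‖ = 1)
    (h : pos {u, v, w} = Set.univ) :
    (0 < D u v ∧ 0 < D v w ∧ 0 < D w u) ∨ (0 < D u w ∧ 0 < D w v ∧ 0 < D v u) := by
  by_contra hcon
  have s1 : D v u = - D u v := D_swap v u
  have s2 : D w v = - D v w := D_swap w v
  have s3 : D u w = - D w u := D_swap u w
  have hW : (D u v ≤ 0 ∧ D u w ≤ 0) ∨ (D v u ≤ 0 ∧ D v w ≤ 0) ∨ (D w u ≤ 0 ∧ D w v ≤ 0) := by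
    rcases lt_trichotomy (D u v) 0 with h1 | h1 | h1
    · rcases le_or_gt 0 (D w u) with h3 | h3
      · exact Or.inl ⟨h1.le, by rw [s3]; linarith⟩
      · rcases le_or_gt 0 (D v w) with h2 | h2
        · exact Or.inr (Or.inr ⟨h3.le, by rw [s2]; linarith⟩)
        · exact absurd (Or.inr ⟨by rw [s3]; linarith, by rw [s2]; linarith,
            by rw [s1]; linarith⟩) hcon
    · rcases le_or_gt (D v w) 0 with h2 | h2
      · exact Or.inr (Or.inl ⟨by rw [s1, h1]; norm_num, h2⟩)
      · rcases le_or_gt (D w u) 0 with h3 | h3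
        · exact Or.inr (Or.inr ⟨h3, by rw [s2]; linarith⟩)
        · exact Or.inl ⟨h1.le, by rw [s3]; linarith⟩
    · rcases le_or_gt (D v w) 0 with h2 | h2
      · exact Or.inr (Or.inl ⟨by rw [s1]; linarith, h2⟩)
      · rcases le_or_gt (D w u) 0 with h3 | h3
        · exact Or.inr (Or.inr ⟨h3, by rw [s2]; linarith⟩)
        · exact absurd (Or.inl ⟨h1, h2, h3⟩) hcon
  have hmem : ∀ x ∈ ({u, v, w} : Set V2), x = u ∨ x = v ∨ x = w := by
    intro x hx
    simpa [Set.mem_insert_iff, Set.mem_singleton_iff] using hx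
  rcases hW with ⟨ha, hb⟩ | ⟨ha, hb⟩ | ⟨ha, hb⟩
  · refine half_contra hu (fun x hx => ?_) h
    rcases hmem x hx with rfl | rfl | rfl
    · rw [D_self]
    · exact ha
    · exact hb
  · refine half_contra hv (fun x hx => ?_) h
    rcases hmem x hx with rfl | rfl | rfl
    · exact ha
    · rw [D_self]
    · exact hb
  · refine half_contra hw (fun x hx => ?_) h
    rcases hmem x hx with rfl | rfl | rfl
    · exact ha
    · exact hb
    · rw [D_self]

lemma antipodal {u v : V2} (hu : ‖u‖ = 1) (hv : ‖v‖ = 1) (h : D u v = 0) :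
    v = u ∨ v = -u := by
  have hu2 := unit_sq hu
  have hv2 := unit_sq hv
  have lag : Cc u v ^ 2 + D u v ^ 2 = (u 0 ^ 2 + u 1 ^ 2) * (v 0 ^ 2 + v 1 ^ 2) := by
    simp only [Cc, D]; ring
  have hcsq : Cc u v ^ 2 = 1 := by
    rw [h] at lag
    rw [hu2, hv2] at lag
    nlinarith [lag]
  have dec0 : (u 0 ^ 2 + u 1 ^ 2) * v 0 = Cc u v * u 0 - D u v * u 1 := by
    simp only [Cc, D]; ring
  have dec1 : (u 0 ^ 2 + u 1 ^ 2) * v 1 = Cc u v * u 1 + D u v * u 0 := by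
    simp only [Cc, D]; ring
  rw [hu2, h] at dec0 dec1
  rcases mul_eq_zero.mp (show (Cc u v - 1) * (Cc u v + 1) = 0 by nlinarith [hcsq]) with hc | hc
  · left
    apply V2_ext
    · nlinarith [dec0]
    · nlinarith [dec1]
  · right
    apply V2_ext
    · simp only [PiLp.neg_apply]; nlinarith [dec0]
    · simp only [PiLp.neg_apply]; nlinarith [dec1]

lemma sine_mono {u x a : V2} (hu : ‖u‖ = 1) (hx : ‖x‖ = 1) (ha : ‖a‖ = 1)
    (hx1 : 0 < D u x) (ha1 : 0 < D u a) (hc : Cc u a ≤ Cc u x) : 0 ≤ D x a := by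
  have hu2 := unit_sq hu
  have hx2 := unit_sq hx
  have ha2 := unit_sq ha
  have hf : D x a = Cc u x * D u a - D u x * Cc u a := by
    have hfr : (u 0 ^ 2 + u 1 ^ 2) * D x a = Cc u x * D u a - D u x * Cc u a := by
      simp only [Cc, D]; ring
    rw [hu2] at hfr; linarith
  have hlx : Cc u x ^ 2 + D u x ^ 2 = 1 := by
    have lag : Cc u x ^ 2 + D u x ^ 2 = (u 0 ^ 2 + u 1 ^ 2) * (x 0 ^ 2 + x 1 ^ 2) := by
      simp only [Cc, D]; ring
    rw [hu2, hx2] at lag; linarith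
  have hla : Cc u a ^ 2 + D u a ^ 2 = 1 := by
    have lag : Cc u a ^ 2 + D u a ^ 2 = (u 0 ^ 2 + u 1 ^ 2) * (a 0 ^ 2 + a 1 ^ 2) := by
      simp only [Cc, D]; ring
    rw [hu2, ha2] at lag; linarith
  rw [hf]
  rcases le_or_gt (Cc u x) 0 with h | h
  · -- Cc u a ≤ Cc u x ≤ 0, so D u x ≥ D u a
    have hs : D u a ≤ D u x := by nlinarith
    nlinarith [mul_nonneg (neg_nonneg.mpr (hc.trans h)) (sub_nonneg.mpr hs),
      mul_nonneg ha1.le (sub_nonneg.mpr hc)]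
  · rcases le_or_gt (Cc u a) 0 with h' | h'
    · nlinarith [mul_nonneg h.le ha1.le, mul_nonneg hx1.le (neg_nonneg.mpr h')]
    · -- 0 < Cc u a ≤ Cc u x, so D u x ≤ D u a
      have hs : D u x ≤ D u a := by nlinarith
      nlinarith [mul_nonneg ha1.le (sub_nonneg.mpr hc),
        mul_nonneg h'.le (sub_nonneg.mpr hs)]

lemma mem_Usq_iff {U : Set V2} (hunit : ∀ v ∈ U, ‖v‖ = 1) {u : V2} :
    u ∈ Usq U ↔ u ∈ U ∧ ∀ v ∈ U, ∀ w ∈ U, 0 < D u v → D u w < 0 → D v w ≤ 0 := by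
  constructor
  · rintro ⟨hu, hn⟩
    refine ⟨hu, fun v hv w hw h1 h2 => ?_⟩
    by_contra h3
    push_neg at h3
    have h4 : 0 < D w u := by rw [D_swap]; linarith
    exact hn ⟨v, hv, w, hw, span_of_orient h1 h3 h4⟩
  · rintro ⟨hu, hP⟩
    refine ⟨hu, ?_⟩
    rintro ⟨v, hv, w, hw, hspan⟩
    rcases orient_of_span (hunit u hu) (hunit v hv) (hunit w hw) hspan with
      ⟨h1, h2, h3⟩ | ⟨h1, h2, h3⟩
    · have hw' : D u w < 0 := by rw [D_swap] at h3; linarith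
      exact absurd (hP v hv w hw h1 hw') (not_le.mpr h2)
    · have hv' : D u v < 0 := by rw [D_swap] at h3; linarith
      exact absurd (hP w hw v hv h1 hv') (not_le.mpr h2)

lemma Usq_subset (U : Set V2) : Usq U ⊆ U := fun _ hx => hx.1

lemma neg_mem {U : Set V2} (hfin : U.Finite) (hunit : ∀ v ∈ U, ‖v‖ = 1)
    (hpos : pos U = Set.univ) {u : V2} (hu : u ∈ Usq U) : -u ∈ U := by
  rw [mem_Usq_iff hunit] at hu
  obtain ⟨huU, hP⟩ := hu
  by_contra hnu
  obtain ⟨a, haU, haD⟩ := exists_posD hpos (hunit u huU)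
  have hAfin : {z | z ∈ U ∧ 0 < D u z}.Finite := hfin.subset (fun x hx => hx.1)
  obtain ⟨b, ⟨hbU, hbD⟩, hbmin⟩ :=
    Set.exists_min_image _ (fun z => Cc u z) hAfin ⟨a, haU, haD⟩
  refine half_contra (hunit b hbU) (fun x hx => ?_) hpos
  rcases lt_trichotomy (D u x) 0 with h | h | h
  · exact hP b hbU x hx hbD h
  · rcases antipodal (hunit u huU) (hunit x hx) h with rfl | rfl
    · rw [D_swap]; linarith
    · exact absurd hx hnu
  · have hmin := hbmin x ⟨hx, h⟩
    have := sine_mono (hunit u huU) (hunit x hx) (hunit b hbU) h hbD hmin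
    rw [D_swap]; linarith

section Pair

variable {U : Set V2} (hfin : U.Finite) (hunit : ∀ v ∈ U, ‖v‖ = 1)
  (hpos : pos U = Set.univ) {u1 u2 : V2}
  (h1 : u1 ∈ Usq U) (h2 : u2 ∈ Usq U) (hD : 0 < D u1 u2)

include hfin hunit hpos h1 h2 hD

lemma arc_structure :
    ∀ x ∈ U, (0 ≤ D u1 x ∧ D u2 x ≤ 0) ∨ x = -u1 ∨ x = -u2 := by
  have h1U : u1 ∈ U := h1.1
  have h2U : u2 ∈ U := h2.1
  have hn1 : -u1 ∈ U := neg_mem hfin hunit hpos h1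
  have hn2 : -u2 ∈ U := neg_mem hfin hunit hpos h2
  obtain ⟨-, hP1⟩ := (mem_Usq_iff hunit).mp h1
  obtain ⟨-, hP2⟩ := (mem_Usq_iff hunit).mp h2
  intro x hx
  rcases lt_trichotomy (D u1 x) 0 with h | h | h
  · right; right
    rcases lt_trichotomy (D u2 x) 0 with h' | h' | h'
    · exfalso
      have hv : 0 < D u2 (-u1) := by rw [D_neg_right, D_swap u2 u1]; linarith
      have := hP2 (-u1) hn1 x hx hv h'
      rw [D_neg_left] at this
      linarith
    · rcases antipodal (hunit u2 h2U) (hunit x hx) h' with rfl | rfl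
      · exfalso
        linarith
      · rfl
    · exfalso
      have hw : D u2 u1 < 0 := by rw [D_swap]; linarith
      have := hP2 x hx u1 h1U h' hw
      rw [D_swap] at this
      linarith
  · rcases antipodal (hunit u1 h1U) (hunit x hx) h with rfl | rfl
    · left
      constructor
      · rw [D_self]
      · rw [D_swap]; linarith
    · right; left; rfl
  · left
    refine ⟨h.le, ?_⟩
    have hw : D u1 (-u2) < 0 := by rw [D_neg_right]; linarith
    have := hP1 x hx (-u2) hn2 h hw
    rw [D_neg_right] at this
    rw [D_swap]
    linarith

lemma usq_subset_four : Usq U ⊆ {u1, -u1, u2, -u2} := by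
  have K1 := arc_structure hfin hunit hpos h1 h2 hD
  have h1U : u1 ∈ U := h1.1
  intro u3 h3
  have h3U : u3 ∈ U := h3.1
  have hn3 : -u3 ∈ U := neg_mem hfin hunit hpos h3
  simp only [Set.mem_insert_iff, Set.mem_singleton_iff]
  rcases K1 u3 h3U with ⟨ha, hb⟩ | h | h
  · rcases K1 (-u3) hn3 with ⟨ha', hb'⟩ | h' | h'
    · rw [D_neg_right] at ha'
      have hzero : D u1 u3 = 0 := le_antisymm (by linarith) ha
      rcases antipodal (hunit u1 h1U) (hunit u3 h3U) hzero with rfl | rfl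
      · tauto
      · tauto
    · have : u3 = u1 := neg_inj.mp h'
      tauto
    · have : u3 = u2 := neg_inj.mp h'
      tauto
  · tauto
  · tauto

/-- both `-u1` and `-u2` in `U_□` are equivalent to: no point of `U` lies strictly
inside the arc from `u1` to `u2`. -/
lemma neg_iff_neg : (-u1 ∈ Usq U) ↔ (-u2 ∈ Usq U) := by
  have K1 := arc_structure hfin hunit hpos h1 h2 hD
  have h1U : u1 ∈ U := h1.1
  have h2U : u2 ∈ U := h2.1
  have hn1 : -u1 ∈ U := neg_mem hfin hunit hpos h1
  have hn2 : -u2 ∈ U := neg_mem hfin hunit hpos h2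
  have hQ1 : (-u1 ∈ Usq U) ↔ (∀ x ∈ U, ¬(0 < D u1 x ∧ D u2 x < 0)) := by
    constructor
    · intro hmem
      obtain ⟨-, hPn⟩ := (mem_Usq_iff hunit).mp hmem
      rintro x hx ⟨hxa, hxb⟩
      have hv : 0 < D (-u1) (-u2) := by rw [D_neg_left, D_neg_right]; linarith
      have hw : D (-u1) x < 0 := by rw [D_neg_left]; linarith
      have := hPn (-u2) hn2 x hx hv hw
      rw [D_neg_left] at this
      linarith
    · intro hQ
      rw [mem_Usq_iff hunit]
      refine ⟨hn1, fun v hv w hw hva hwa => ?_⟩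
      rw [D_neg_left] at hva hwa
      -- D u1 v < 0, 0 < D u1 w
      have hveq : v = -u2 := by
        rcases K1 v hv with ⟨ha, hb⟩ | h | h
        · linarith
        · exfalso; rw [h, D_neg_right, D_self] at hva; linarith
        · exact h
      have hweq : w = u2 := by
        rcases K1 w hw with ⟨ha, hb⟩ | h | h
        · have := hQ w hw
          have hge : 0 ≤ D u2 w := by
            by_contra hlt
            push_neg at hlt
            exact this ⟨by linarith, hlt⟩
          have hzero : D u2 w = 0 := le_antisymm hb hge
          rw [D_swap] at hzero
          rcases antipodal (hunit u2 h2U) (hunit w hw)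
            (by rw [D_swap]; linarith) with h' | h'
          · exact h'
          · exfalso; rw [h', D_neg_right] at hwa; linarith
        · exfalso; rw [h, D_neg_right, D_self] at hwa; linarith
        · exfalso; rw [h, D_neg_right] at hwa; linarith
      rw [hveq, hweq, D_neg_left, D_self]
      linarith
  have hQ2 : (-u2 ∈ Usq U) ↔ (∀ x ∈ U, ¬(0 < D u1 x ∧ D u2 x < 0)) := by
    constructor
    · intro hmem
      obtain ⟨-, hPn⟩ := (mem_Usq_iff hunit).mp hmem
      rintro x hx ⟨hxa, hxb⟩
      have hv : 0 < D (-u2) x := by rw [D_neg_left]; linarith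
      have hw : D (-u2) (-u1) < 0 := by
        rw [D_neg_left, D_neg_right, D_swap u2 u1]; linarith
      have := hPn x hx (-u1) hn1 hv hw
      rw [D_neg_right, D_swap] at this
      linarith
    · intro hQ
      rw [mem_Usq_iff hunit]
      refine ⟨hn2, fun v hv w hw hva hwa => ?_⟩
      rw [D_neg_left] at hva hwa
      -- D u2 v < 0, 0 < D u2 w
      have hveq : v = u1 := by
        rcases K1 v hv with ⟨ha, hb⟩ | h | h
        · have := hQ v hv
          have hge : D u1 v ≤ 0 := by
            by_contra hlt
            push_neg at hlt
            exact this ⟨hlt, by linarith⟩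
          have hzero : D u1 v = 0 := le_antisymm hge ha
          rcases antipodal (hunit u1 h1U) (hunit v hv) hzero with h' | h'
          · exact h'
          · exfalso
            rw [h', D_neg_right, D_swap u2 u1] at hva
            linarith
        · exfalso; rw [h, D_neg_right, D_swap u2 u1] at hva; linarith
        · exfalso; rw [h, D_neg_right, D_self] at hva; linarith
      have hweq : w = -u1 := by
        rcases K1 w hw with ⟨ha, hb⟩ | h | h
        · exfalso; linarith
        · exact h
        · exfalso; rw [h, D_neg_right, D_self] at hwa; linarith
      rw [hveq, hweq, D_neg_right, D_self]
      linarith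
  rw [hQ1, hQ2]

end Pair

lemma count_final {U : Set V2} (hunit : ∀ v ∈ U, ‖v‖ = 1) {a b : V2}
    (ha : a ∈ Usq U) (hb : b ∈ Usq U) (hab : b ≠ a) (hab' : b ≠ -a)
    (hsub : Usq U ⊆ {a, -a, b, -b}) (hiff : (-a ∈ Usq U) ↔ (-b ∈ Usq U)) :
    (Usq U).ncard ∈ ({0, 1, 2, 4} : Set ℕ) := by
  classical
  have haU : a ∈ U := ha.1
  have hbU : b ∈ U := hb.1
  have hau : ‖a‖ = 1 := hunit a haU
  have hbu : ‖b‖ = 1 := hunit b hbU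
  have d1 : a ≠ -a := ne_neg_self hau
  have d2 : b ≠ -b := ne_neg_self hbu
  have d3 : a ≠ b := hab.symm
  have d4 : a ≠ -b := by
    intro h
    apply hab'
    rw [h, neg_neg]
  have d5 : -a ≠ b := fun h => hab' h.symm
  have d6 : -a ≠ -b := fun h => d3 (neg_inj.mp h)
  by_cases hna : -a ∈ Usq U
  · have hnb : -b ∈ Usq U := hiff.mp hna
    have hset : Usq U = {a, -a, b, -b} := by
      apply Set.Subset.antisymm hsub
      rintro x (rfl | rfl | rfl | rfl) <;> assumption
    rw [hset]
    have hc : ({a, -a, b, -b} : Set V2).ncard = 4 := by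
      rw [Set.ncard_insert_of_notMem (by
        simp only [Set.mem_insert_iff, Set.mem_singleton_iff]
        push_neg
        exact ⟨d1, d3, d4⟩) (Set.toFinite _)]
      rw [Set.ncard_insert_of_notMem (by
        simp only [Set.mem_insert_iff, Set.mem_singleton_iff]
        push_neg
        exact ⟨d5, d6⟩) (Set.toFinite _)]
      rw [Set.ncard_pair d2]
    rw [hc]
    simp
  · have hnb : -b ∉ Usq U := fun h => hna (hiff.mpr h)
    have hset : Usq U = {a, b} := by
      apply Set.Subset.antisymm
      · intro x hx
        rcases hsub hx with rfl | rfl | rfl | rfl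
        · exact Set.mem_insert _ _
        · exact absurd hx hna
        · exact Set.mem_insert_of_mem _ rfl
        · exact absurd hx hnb
      · rintro x (rfl | rfl) <;> assumption
    rw [hset, Set.ncard_pair d3]
    simp

end Stmt5Aux

open Stmt5Aux in
/-- `|U_□| ∈ {0, 1, 2, 4}`; in particular `|U_□| ≠ 3`. -/
theorem stmt5 (U : Set V2) (hfin : U.Finite) (hunit : ∀ v ∈ U, ‖v‖ = 1)
    (hpos : pos U = Set.univ) :
    (Usq U).ncard ∈ ({0, 1, 2, 4} : Set ℕ) := by
  classical
  rcases Set.eq_empty_or_nonempty (Usq U) with he | ⟨u1, hu1⟩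
  · rw [he, Set.ncard_empty]
    simp
  · by_cases hsub : Usq U ⊆ {u1, -u1}
    · have hle : (Usq U).ncard ≤ 2 := by
        calc (Usq U).ncard ≤ ({u1, -u1} : Set V2).ncard :=
              Set.ncard_le_ncard hsub (Set.toFinite _)
          _ ≤ 2 := by
              calc ({u1, -u1} : Set V2).ncard ≤ ({-u1} : Set V2).ncard + 1 :=
                    Set.ncard_insert_le _ _
                _ ≤ 2 := by rw [Set.ncard_singleton]
      simp only [Set.mem_insert_iff, Set.mem_singleton_iff]
      omega
    · obtain ⟨u2, hu2, hne2⟩ := Set.not_subset.mp hsub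
      have hne2' : u2 ≠ u1 ∧ u2 ≠ -u1 := by
        simpa [Set.mem_insert_iff, Set.mem_singleton_iff] using hne2
      have hu1U : u1 ∈ U := hu1.1
      have hu2U : u2 ∈ U := hu2.1
      have hD0 : D u1 u2 ≠ 0 := by
        intro h
        rcases antipodal (hunit u1 hu1U) (hunit u2 hu2U) h with h' | h'
        · exact hne2'.1 h'
        · exact hne2'.2 h'
      rcases hD0.lt_or_gt with hneg | hposD
      · have hD21 : 0 < D u2 u1 := by rw [D_swap]; linarith
        have hS1 := usq_subset_four hfin hunit hpos hu2 hu1 hD21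
        have hS2 := neg_iff_neg hfin hunit hpos hu2 hu1 hD21
        exact count_final hunit hu2 hu1 hne2'.1.symm
          (by intro h; apply hne2'.2; rw [h, neg_neg]) hS1 hS2
      · have hS1 := usq_subset_four hfin hunit hpos hu1 hu2 hposD
        have hS2 := neg_iff_neg hfin hunit hpos hu1 hu2 hposD
        exact count_final hunit hu1 hu2 hne2'.1 hne2'.2 hS1 hS2
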